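/- Let 𝔥 be a complex Hilbert space, a < b real, and V : ℝ × ℝ → B(𝔥) continuous on [a,b] × [a,b] such that for every λ, μ ∈ [a,b] the operator V(λ,μ) is a compact operator on 𝔥. Let 𝒱 be a bounded linear operator on H = L²((a,b), 𝔥) satisfying, for every f ∈ H, (𝒱 f)(λ) = ∫_a^b V(λ,μ) (f(μ)) dμ for almost every λ ∈ (a,b). Then 𝒱 is a compact operator on H. -/

import Mathlib

open MeasureTheory

open scoped ENNReal

section Aux

variable {E : Type*} [NormedAddCommGroup E] [NormedSpace ℂ E] [CompleteSpace E]
variable {μ : Measure ℝ} [IsFiniteMeasure μ]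

private lemma l2_integrable (f : Lp E 2 μ) : Integrable (⇑f) μ :=
  (Lp.memLp f).integrable one_le_two

private lemma l2_integral_norm_le (f : Lp E 2 μ) :
    ∫ x, ‖f x‖ ∂μ ≤ (μ Set.univ).toReal ^ ((1:ℝ)/2) * ‖f‖ := by
  have hmeas := Lp.aestronglyMeasurable f
  have h1 : eLpNorm ⇑f 1 μ ≤ eLpNorm ⇑f 2 μ * μ Set.univ ^ ((1:ℝ)/2) := by
    have h := eLpNorm_le_eLpNorm_mul_rpow_measure_univ (p := 1) (q := 2)
      (by norm_num) hmeas
    have : (1:ℝ)/(1:ℝ≥0∞).toReal - 1/(2:ℝ≥0∞).toReal = (1:ℝ)/2 := by norm_num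
    rwa [this] at h
  have h2 : ∫ x, ‖f x‖ ∂μ = (eLpNorm ⇑f 1 μ).toReal := by
    rw [integral_norm_eq_lintegral_enorm hmeas, eLpNorm_one_eq_lintegral_enorm]
  have hne : eLpNorm ⇑f 2 μ * μ Set.univ ^ ((1:ℝ)/2) ≠ ⊤ :=
    ENNReal.mul_ne_top (Lp.eLpNorm_ne_top f)
      (ENNReal.rpow_ne_top_of_nonneg (by norm_num) (measure_ne_top μ _))
  have h3 := ENNReal.toReal_mono hne h1
  rw [h2]
  refine h3.trans ?_
  rw [ENNReal.toReal_mul, ← ENNReal.toReal_rpow, Lp.norm_def]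
  ring_nf
  exact le_rfl

private noncomputable def setIntegralCLM₂ (s : Set ℝ) : Lp E 2 μ →L[ℂ] E :=
  LinearMap.mkContinuousOfExistsBound
    { toFun := fun f => ∫ x in s, f x ∂μ
      map_add' := by
        intro f g
        have h : ∫ x in s, (f + g : Lp E 2 μ) x ∂μ = ∫ x in s, (f x + g x) ∂μ :=
          integral_congr_ae (ae_restrict_of_ae (Lp.coeFn_add f g))
        rw [h, integral_add ((l2_integrable f).restrict)
          ((l2_integrable g).restrict)]
      map_smul' := by
        intro c f
        simp only [RingHom.id_apply]
        have h : ∫ x in s, (c • f : Lp E 2 μ) x ∂μ = ∫ x in s, c • (f x) ∂μ :=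
          integral_congr_ae (ae_restrict_of_ae (Lp.coeFn_smul c f))
        rw [h, integral_smul] }
    ⟨(μ Set.univ).toReal ^ ((1:ℝ)/2), fun f => by
      calc ‖∫ x in s, f x ∂μ‖ ≤ ∫ x in s, ‖f x‖ ∂μ := norm_integral_le_integral_norm _
        _ ≤ ∫ x, ‖f x‖ ∂μ :=
            setIntegral_le_integral (l2_integrable f).norm
              (Filter.Eventually.of_forall fun x => norm_nonneg _)
        _ ≤ (μ Set.univ).toReal ^ ((1:ℝ)/2) * ‖f‖ := l2_integral_norm_le f⟩

@[simp] private lemma setIntegralCLM₂_apply (s : Set ℝ) (f : Lp E 2 μ) :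
    setIntegralCLM₂ (E := E) s f = ∫ x in s, f x ∂μ := rfl

private noncomputable def indicatorCLM₂ {s : Set ℝ} (hs : MeasurableSet s) (hμs : μ s ≠ ⊤) :
    E →L[ℂ] Lp E 2 μ :=
  LinearMap.mkContinuousOfExistsBound
    { toFun := fun c => indicatorConstLp 2 hs hμs c
      map_add' := fun c d => by rw [indicatorConstLp_add]
      map_smul' := by
        intro r c
        simp only [RingHom.id_apply]
        apply Lp.ext
        filter_upwards [indicatorConstLp_coeFn (p := 2) (hs := hs) (hμs := hμs) (c := r • c),
          Lp.coeFn_smul r (indicatorConstLp 2 hs hμs c),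
          indicatorConstLp_coeFn (p := 2) (hs := hs) (hμs := hμs) (c := c)] with x h1 h2 h3
        rw [h1, h2, Pi.smul_apply, h3]
        by_cases hx : x ∈ s <;> simp [Set.indicator, hx] }
    ⟨(μ s).toReal ^ ((1:ℝ)/2), fun c => by
      show ‖indicatorConstLp 2 hs hμs c‖ ≤ _
      calc ‖indicatorConstLp 2 hs hμs c‖
          ≤ ‖c‖ * (μ s).toReal ^ (1 / (2:ℝ≥0∞).toReal) := norm_indicatorConstLp_le
        _ = (μ s).toReal ^ ((1:ℝ)/2) * ‖c‖ := by
            rw [mul_comm]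
            norm_num⟩

@[simp] private lemma indicatorCLM₂_apply {s : Set ℝ} (hs : MeasurableSet s) (hμs : μ s ≠ ⊤)
    (c : E) : indicatorCLM₂ (E := E) hs hμs c = indicatorConstLp 2 hs hμs c := rfl

private lemma coeFn_finset_sum {ι : Type*} (s : Finset ι) (F : ι → Lp E 2 μ) :
    ⇑(∑ i ∈ s, F i) =ᵐ[μ] fun x => ∑ i ∈ s, F i x := by
  classical
  induction s using Finset.induction_on with
  | empty =>
    simp only [Finset.sum_empty]
    exact Lp.coeFn_zero E 2 μ
  | insert _ _ ha ih =>
    rename_i c t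
    rw [Finset.sum_insert ha]
    filter_upwards [Lp.coeFn_add (F c) (∑ i ∈ t, F i), ih] with x h1 h2
    rw [h1, Pi.add_apply, h2, Finset.sum_insert ha]

private lemma isCompactOperator_finset_sum {ι M N : Type*}
    [NormedAddCommGroup M] [NormedSpace ℂ M] [NormedAddCommGroup N] [NormedSpace ℂ N]
    (s : Finset ι) (F : ι → (M →L[ℂ] N))
    (h : ∀ i ∈ s, IsCompactOperator ⇑(F i)) :
    IsCompactOperator ⇑(∑ i ∈ s, F i) := by
  classical
  induction s using Finset.induction_on with
  | empty => simpa using isCompactOperator_zero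
  | insert _ _ ha ih =>
    rename_i c t
    rw [Finset.sum_insert ha, ContinuousLinearMap.coe_add']
    exact (h c (Finset.mem_insert_self _ _)).add
      (ih fun i hi => h i (Finset.mem_insert_of_mem hi))

private lemma biUnion_Ioc_aux (t : ℕ → ℝ) (ht : Monotone t) :
    ∀ m : ℕ, (⋃ i ∈ Finset.range m, Set.Ioc (t i) (t (i + 1))) = Set.Ioc (t 0) (t m)
  | 0 => by simp
  | m + 1 => by
    rw [Finset.range_add_one, Finset.set_biUnion_insert, biUnion_Ioc_aux t ht m,
      Set.union_comm, Set.Ioc_union_Ioc_eq_Ioc (ht (Nat.zero_le m)) (ht (Nat.le_succ m))]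

private lemma Ioc_disjoint_aux (t : ℕ → ℝ) (ht : Monotone t) {i j : ℕ} (hij : i ≠ j) :
    Disjoint (Set.Ioc (t i) (t (i + 1))) (Set.Ioc (t j) (t (j + 1))) := by
  rw [Set.disjoint_left]
  intro x hxi hxj
  rcases hij.lt_or_gt with h | h
  · exact absurd (hxi.2.trans (ht h)) (not_le.2 hxj.1)
  · exact absurd (hxj.2.trans (ht h)) (not_le.2 hxi.1)

end Aux

set_option maxHeartbeats 1000000 in
set_option synthInstance.maxHeartbeats 100000 in
private theorem integral_operator_compact_aux
    {𝕙 : Type*} [NormedAddCommGroup 𝕙] [InnerProductSpace ℂ 𝕙] [CompleteSpace 𝕙]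
    (a b : ℝ) (hab : a < b)
    (V : ℝ → ℝ → (𝕙 →L[ℂ] 𝕙))
    (hVcont : ContinuousOn (fun p : ℝ × ℝ => V p.1 p.2) (Set.Icc a b ×ˢ Set.Icc a b))
    (hVcompact : ∀ x ∈ Set.Icc a b, ∀ y ∈ Set.Icc a b, IsCompactOperator ⇑(V x y))
    (μ : Measure ℝ) (hμdef : μ = volume.restrict (Set.Ioo a b))
    (𝒱 : Lp 𝕙 2 μ →L[ℂ] Lp 𝕙 2 μ)
    (hint : ∀ f : Lp 𝕙 2 μ, ∀ᵐ x ∂μ, (𝒱 f) x = ∫ y in a..b, (V x y) (f y)) :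
    IsCompactOperator ⇑𝒱 := by
  haveI : IsFiniteMeasure μ := by
    constructor
    rw [hμdef, Measure.restrict_apply_univ, Real.volume_Ioo]
    exact ENNReal.ofReal_lt_top
  obtain ⟨M, hM⟩ := (isCompact_Icc.prod isCompact_Icc).exists_bound_of_continuousOn hVcont
  set D : ℝ := (μ Set.univ).toReal ^ ((1:ℝ)/2) with hDdef
  have hD : 0 ≤ D := Real.rpow_nonneg ENNReal.toReal_nonneg _
  set K0 : ℝ := (measureUnivNNReal μ : ℝ) ^ ((2:ℝ≥0∞).toReal)⁻¹ with hK0def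
  have hK0 : 0 ≤ K0 := Real.rpow_nonneg (NNReal.coe_nonneg _) _
  suffices h : ∀ ε > 0, ∃ T : Lp 𝕙 2 μ →L[ℂ] Lp 𝕙 2 μ, IsCompactOperator ⇑T ∧ ‖𝒱 - T‖ ≤ ε by
    have hcl : 𝒱 ∈ closure {T : Lp 𝕙 2 μ →L[ℂ] Lp 𝕙 2 μ | IsCompactOperator ⇑T} := by
      rw [Metric.mem_closure_iff]
      intro ε hε
      obtain ⟨T, hT, hTle⟩ := h (ε/2) (by linarith)
      exact ⟨T, hT, by rw [dist_eq_norm]; linarith⟩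
    rw [isClosed_setOf_isCompactOperator.closure_eq] at hcl
    exact hcl
  intro ε hε
  set ε' : ℝ := ε / (K0 * D + 1) with hε'def
  have hK0D : (0:ℝ) < K0 * D + 1 := by positivity
  have hε' : 0 < ε' := div_pos hε hK0D
  have hUC := (isCompact_Icc.prod isCompact_Icc).uniformContinuousOn_of_continuous hVcont
  rw [Metric.uniformContinuousOn_iff] at hUC
  obtain ⟨δ, hδ, hδ'⟩ := hUC ε' hε'
  obtain ⟨n0, hn0⟩ := exists_nat_gt ((b - a) / δ)
  set n : ℕ := n0 + 1 with hndef
  have hn : ((b - a)/δ : ℝ) < n := by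
    refine hn0.trans_le ?_
    exact_mod_cast Nat.le_succ n0
  have hnpos : (0:ℝ) < n := by
    have : (0:ℝ) < (b - a)/δ := div_pos (by linarith) hδ
    linarith
  set h0 : ℝ := (b - a) / n with hh0def
  have hh0pos : 0 < h0 := div_pos (by linarith) hnpos
  have hh0δ : h0 < δ := by
    rw [hh0def, div_lt_iff₀ hnpos]
    have := (div_lt_iff₀ hδ).1 hn
    linarith [this]
  set t : ℕ → ℝ := fun i => a + i * h0 with htdef
  have htmono : Monotone t := by
    intro i j hij
    have : (i:ℝ) ≤ j := Nat.cast_le.2 hij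
    simp only [htdef]
    nlinarith
  have ht0 : t 0 = a := by simp [htdef]
  have htn : t n = b := by
    simp only [htdef, hh0def]
    field_simp
    ring
  have htstep : ∀ i : ℕ, t (i+1) - t i = h0 := by
    intro i
    simp only [htdef]
    push_cast
    ring
  have htmem : ∀ i ≤ n, t i ∈ Set.Icc a b := by
    intro i hi
    constructor
    · rw [← ht0]; exact htmono (Nat.zero_le i)
    · rw [← htn]; exact htmono hi
  set S : ℕ → Set ℝ := fun i => Set.Ioc (t i) (t (i+1)) with hSdef
  have hSmeas : ∀ i, MeasurableSet (S i) := fun i => measurableSet_Ioc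
  have hScover : (⋃ i ∈ Finset.range n, S i) = Set.Ioc a b := by
    rw [hSdef]
    rw [biUnion_Ioc_aux t htmono n, ht0, htn]
  have hSdisj : ∀ {i j : ℕ}, i ≠ j → Disjoint (S i) (S j) := by
    intro i j hij
    exact Ioc_disjoint_aux t htmono hij
  have hμrestr : μ.restrict (Set.Ioc a b) = μ := by
    rw [hμdef, Measure.restrict_restrict measurableSet_Ioc,
      Set.inter_eq_self_of_subset_right Set.Ioo_subset_Ioc_self]
  set c : ℕ → ℕ → (Lp 𝕙 2 μ →L[ℂ] Lp 𝕙 2 μ) := fun i j =>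
    (indicatorCLM₂ (hSmeas i) (measure_ne_top μ _)).comp
      ((V (t (i+1)) (t (j+1))).comp (setIntegralCLM₂ (S j))) with hcdef
  set T : Lp 𝕙 2 μ →L[ℂ] Lp 𝕙 2 μ :=
    ∑ p ∈ Finset.range n ×ˢ Finset.range n, c p.1 p.2 with hTdef
  refine ⟨T, ?_, ?_⟩
  · apply isCompactOperator_finset_sum
    rintro ⟨i, j⟩ hp
    rw [Finset.mem_product, Finset.mem_range, Finset.mem_range] at hp
    have hni : t (i+1) ∈ Set.Icc a b := htmem _ (by omega)
    have hnj : t (j+1) ∈ Set.Icc a b := htmem _ (by omega)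
    have hK := hVcompact _ hni _ hnj
    have h1 : IsCompactOperator (⇑(V (t (i+1)) (t (j+1))) ∘ ⇑(setIntegralCLM₂ (S j) :
        Lp 𝕙 2 μ →L[ℂ] 𝕙)) := hK.comp_clm _
    have h2 := h1.continuous_comp
      (indicatorCLM₂ (E := 𝕙) (hSmeas i) (measure_ne_top μ _)).continuous
    have : ⇑(c i j) = ⇑(indicatorCLM₂ (E := 𝕙) (hSmeas i) (measure_ne_top μ _)) ∘
        (⇑(V (t (i+1)) (t (j+1))) ∘ ⇑(setIntegralCLM₂ (S j) : Lp 𝕙 2 μ →L[ℂ] 𝕙)) := rfl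
    rw [this]
    exact h2
  · refine ContinuousLinearMap.opNorm_le_bound _ hε.le fun f => ?_
    have hfi : Integrable (⇑f) μ := l2_integrable f
    have hGint : ∀ x ∈ Set.Icc a b, Integrable (fun y => V x y (f y)) μ := by
      intro x hx
      have hcont : ContinuousOn (fun y => V x y) (Set.Ioo a b) := by
        have h1 : ContinuousOn (fun y => V x y) (Set.Icc a b) := by
          have := hVcont.comp ((continuous_const.prodMk continuous_id).continuousOn
            (s := Set.Icc a b)) (fun y hy => Set.mk_mem_prod hx hy)
          exact this
        exact h1.mono Set.Ioo_subset_Icc_self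
      have hmeasA : AEStronglyMeasurable (fun y => V x y) μ := by
        rw [hμdef]
        exact hcont.aestronglyMeasurable_of_isSeparable measurableSet_Ioo
          (TopologicalSpace.IsSeparable.of_separableSpace _)
      have hmeas : AEStronglyMeasurable (fun y => V x y (f y)) μ :=
        isBoundedBilinearMap_apply.continuous.comp_aestronglyMeasurable
          (hmeasA.prodMk (Lp.aestronglyMeasurable f))
      refine Integrable.mono' (hfi.norm.const_mul M) hmeas ?_
      have hyIoo : ∀ᵐ y ∂μ, y ∈ Set.Ioo a b := hμdef ▸ ae_restrict_mem measurableSet_Ioo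
      filter_upwards [hyIoo] with y hy
      calc ‖V x y (f y)‖ ≤ ‖V x y‖ * ‖f y‖ := (V x y).le_opNorm _
        _ ≤ M * ‖f y‖ := mul_le_mul_of_nonneg_right
            (hM (x, y) (Set.mk_mem_prod hx (Set.Ioo_subset_Icc_self hy))) (norm_nonneg _)
    have key : ∀ᵐ x ∂μ, ‖(𝒱 f) x - (T f) x‖ ≤ ε' * (D * ‖f‖) := by
      have hTf1 : T f = ∑ p ∈ Finset.range n ×ˢ Finset.range n,
          indicatorConstLp 2 (hSmeas p.1) (measure_ne_top μ _)
            (V (t (p.1+1)) (t (p.2+1)) (∫ y in S p.2, f y ∂μ)) := by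
        rw [hTdef, ContinuousLinearMap.sum_apply]
        exact Finset.sum_congr rfl fun p hp => by
          rw [hcdef, ContinuousLinearMap.comp_apply, ContinuousLinearMap.comp_apply,
            setIntegralCLM₂_apply, indicatorCLM₂_apply]
      have hTf : ⇑(T f) =ᵐ[μ] fun x => ∑ p ∈ Finset.range n ×ˢ Finset.range n,
          (S p.1).indicator (fun _ => V (t (p.1+1)) (t (p.2+1)) (∫ y in S p.2, f y ∂μ)) x := by
        rw [hTf1]
        have h1 := coeFn_finset_sum (Finset.range n ×ˢ Finset.range n)
          (fun p => indicatorConstLp 2 (hSmeas p.1) (measure_ne_top μ _)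
            (V (t (p.1+1)) (t (p.2+1)) (∫ y in S p.2, f y ∂μ)))
        have h2 : ∀ᵐ x ∂μ, ∀ p ∈ (Finset.range n ×ˢ Finset.range n : Finset (ℕ × ℕ)),
            (indicatorConstLp 2 (hSmeas p.1) (measure_ne_top μ _)
              (V (t (p.1+1)) (t (p.2+1)) (∫ y in S p.2, f y ∂μ)) : Lp 𝕙 2 μ) x
              = (S p.1).indicator
                (fun _ => V (t (p.1+1)) (t (p.2+1)) (∫ y in S p.2, f y ∂μ)) x :=
          (ae_ball_iff (Finset.range n ×ˢ Finset.range n).countable_toSet).2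
            fun p _ => indicatorConstLp_coeFn
        filter_upwards [h1, h2] with x hx1 hx2
        rw [hx1]
        exact Finset.sum_congr rfl fun p hp => hx2 p hp
      have hxIoo : ∀ᵐ x ∂μ, x ∈ Set.Ioo a b := hμdef ▸ ae_restrict_mem measurableSet_Ioo
      filter_upwards [hxIoo, hint f, hTf] with x hx hVx hTx
      have hxIcc : x ∈ Set.Icc a b := Set.Ioo_subset_Icc_self hx
      have hxIoc : x ∈ ⋃ i ∈ Finset.range n, S i := by
        rw [hScover]; exact ⟨hx.1, hx.2.le⟩
      obtain ⟨i₀, hi₀, hxi₀⟩ := Set.mem_iUnion₂.1 hxIoc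
      have hi₀n : i₀ < n := Finset.mem_range.1 hi₀
      have hTx' : (T f) x = ∑ j ∈ Finset.range n,
          V (t (i₀+1)) (t (j+1)) (∫ y in S j, f y ∂μ) := by
        rw [hTx, Finset.sum_product]
        rw [Finset.sum_eq_single_of_mem i₀ hi₀]
        · exact Finset.sum_congr rfl fun j _ => Set.indicator_of_mem hxi₀ _
        · intro i hi hne
          refine Finset.sum_eq_zero fun j _ => ?_
          exact Set.indicator_of_notMem
            (fun hxi => Set.disjoint_left.1 (hSdisj hne) hxi hxi₀) _
      have hGx : Integrable (fun y => V x y (f y)) μ := hGint x hxIcc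
      have hVx' : (𝒱 f) x = ∑ j ∈ Finset.range n, ∫ y in S j, V x y (f y) ∂μ := by
        rw [hVx, intervalIntegral.integral_of_le hab.le, integral_Ioc_eq_integral_Ioo]
        rw [show (volume.restrict (Set.Ioo a b) : Measure ℝ) = μ.restrict (Set.Ioc a b) from by
          rw [hμrestr, hμdef]]
        rw [← hScover, integral_biUnion_finset _ (fun i _ => hSmeas i)
          (fun i _ j _ hij => hSdisj hij) (fun j _ => hGx.integrableOn)]
      rw [hVx', hTx', ← Finset.sum_sub_distrib]
      have hstep : ∀ j ∈ Finset.range n,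
          ‖∫ y in S j, V x y (f y) ∂μ - V (t (i₀+1)) (t (j+1)) (∫ y in S j, f y ∂μ)‖
            ≤ ∫ y in S j, ε' * ‖f y‖ ∂μ := by
        intro j hj
        have hjn : j < n := Finset.mem_range.1 hj
        have hInt1 : Integrable (fun y => V x y (f y)) (μ.restrict (S j)) := hGx.restrict
        have hInt2 : Integrable (fun y => V (t (i₀+1)) (t (j+1)) (f y)) (μ.restrict (S j)) :=
          (ContinuousLinearMap.integrable_comp _ hfi).restrict
        rw [← ContinuousLinearMap.integral_comp_comm _ hfi.restrict,
          ← integral_sub hInt1 hInt2]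
        refine norm_integral_le_of_norm_le ((hfi.norm.const_mul ε').restrict) ?_
        have hyS : ∀ᵐ y ∂μ.restrict (S j), y ∈ S j := ae_restrict_mem (hSmeas j)
        have hyI : ∀ᵐ y ∂μ.restrict (S j), y ∈ Set.Ioo a b :=
          ae_restrict_of_ae (hμdef ▸ ae_restrict_mem measurableSet_Ioo)
        filter_upwards [hyS, hyI] with y hyS hyI
        have hdx : dist x (t (i₀+1)) < δ := by
          rw [Real.dist_eq, abs_lt]
          have := htstep i₀
          constructor
          · have h1 : t (i₀+1) - x < h0 := by linarith [hxi₀.1]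
            linarith
          · linarith [hxi₀.2, hδ]
        have hdy : dist y (t (j+1)) < δ := by
          rw [Real.dist_eq, abs_lt]
          have := htstep j
          constructor
          · have h1 : t (j+1) - y < h0 := by linarith [hyS.1]
            linarith
          · linarith [hyS.2, hδ]
        have hdist : dist (x, y) ((t (i₀+1)), t (j+1)) < δ := by
          rw [Prod.dist_eq]
          exact max_lt hdx hdy
        have hnear := hδ' (x, y)
          (Set.mk_mem_prod hxIcc (Set.Ioo_subset_Icc_self hyI))
          ((t (i₀+1)), t (j+1))
          (Set.mk_mem_prod (htmem _ (by omega)) (htmem _ (by omega))) hdist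
        calc ‖V x y (f y) - V (t (i₀+1)) (t (j+1)) (f y)‖
            = ‖(V x y - V (t (i₀+1)) (t (j+1))) (f y)‖ := by
              rw [ContinuousLinearMap.sub_apply]
          _ ≤ ‖V x y - V (t (i₀+1)) (t (j+1))‖ * ‖f y‖ :=
              ContinuousLinearMap.le_opNorm _ _
          _ ≤ ε' * ‖f y‖ := mul_le_mul_of_nonneg_right
              (by rw [← dist_eq_norm]; exact hnear.le) (norm_nonneg _)
      calc ‖∑ j ∈ Finset.range n,
            (∫ y in S j, V x y (f y) ∂μ - V (t (i₀+1)) (t (j+1)) (∫ y in S j, f y ∂μ))‖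
          ≤ ∑ j ∈ Finset.range n,
            ‖∫ y in S j, V x y (f y) ∂μ - V (t (i₀+1)) (t (j+1)) (∫ y in S j, f y ∂μ)‖ :=
            norm_sum_le _ _
        _ ≤ ∑ j ∈ Finset.range n, ∫ y in S j, ε' * ‖f y‖ ∂μ := Finset.sum_le_sum hstep
        _ = ∫ y in Set.Ioc a b, ε' * ‖f y‖ ∂μ := by
            rw [← hScover, integral_biUnion_finset _ (fun i _ => hSmeas i)
              (fun i _ j _ hij => hSdisj hij)
              (fun j _ => ((hfi.norm.const_mul ε')).integrableOn)]
        _ = ε' * ∫ y, ‖f y‖ ∂μ := by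
            show ∫ y, ε' * ‖f y‖ ∂(μ.restrict (Set.Ioc a b)) = _
            rw [hμrestr, integral_const_mul]
        _ ≤ ε' * (D * ‖f‖) := mul_le_mul_of_nonneg_left (l2_integral_norm_le f) hε'.le
    have hbound : ‖𝒱 f - T f‖ ≤ K0 * (ε' * (D * ‖f‖)) := by
      apply Lp.norm_le_of_ae_bound (by positivity)
      filter_upwards [key, Lp.coeFn_sub (𝒱 f) (T f)] with x h1 h2
      rw [h2]
      exact h1
    have hfinal : K0 * (ε' * D) ≤ ε := by
      have h1 : (K0 * D + 1) * ε' = ε := by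
        rw [hε'def, mul_div_cancel₀ _ (ne_of_gt hK0D)]
      nlinarith [hε'.le]
    calc ‖(𝒱 - T) f‖ = ‖𝒱 f - T f‖ := by rw [ContinuousLinearMap.sub_apply]
      _ ≤ K0 * (ε' * (D * ‖f‖)) := hbound
      _ = (K0 * (ε' * D)) * ‖f‖ := by ring
      _ ≤ ε * ‖f‖ := mul_le_mul_of_nonneg_right hfinal (norm_nonneg f)



/-- The Ladyzhenskaya–Faddeev compactness property: the integral operator
`(𝒱 f)(λ) = ∫_a^b V(λ,μ) f(μ) dμ` on `L²((a,b),𝕙)` with a continuous kernel whose values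
`V(λ,μ)` are compact operators on `𝕙` is a compact operator on `L²((a,b),𝕙)`. -/
theorem integral_operator_compact
    {𝕙 : Type*} [NormedAddCommGroup 𝕙] [InnerProductSpace ℂ 𝕙] [CompleteSpace 𝕙]
    (a b : ℝ) (hab : a < b)
    (V : ℝ → ℝ → (𝕙 →L[ℂ] 𝕙))
    (hVcont : ContinuousOn (fun p : ℝ × ℝ => V p.1 p.2) (Set.Icc a b ×ˢ Set.Icc a b))
    (hVcompact : ∀ x ∈ Set.Icc a b, ∀ y ∈ Set.Icc a b, IsCompactOperator ⇑(V x y))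
    (𝒱 : Lp 𝕙 2 (volume.restrict (Set.Ioo a b)) →L[ℂ]
         Lp 𝕙 2 (volume.restrict (Set.Ioo a b)))
    (hint : ∀ f : Lp 𝕙 2 (volume.restrict (Set.Ioo a b)),
      ∀ᵐ x ∂(volume.restrict (Set.Ioo a b)),
        (𝒱 f) x = ∫ y in a..b, (V x y) (f y)) :
    IsCompactOperator ⇑𝒱 :=
  integral_operator_compact_aux a b hab V hVcont hVcompact _ rfl 𝒱 hint
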